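/- Every theta graph θ_{p,q,r} other than θ_{2,2,2} = K_{2,3} is uniquely (2,3)-list colorable. -/

import Mathlib

open SimpleGraph Finset

variable {V : Type*}

/-- `c` is a proper list coloring of `G` from lists `L`. -/
def IsLC (G : SimpleGraph V) (L : V → Finset ℕ) (c : V → ℕ) : Prop :=
  (∀ v, c v ∈ L v) ∧ ∀ ⦃u w⦄, G.Adj u w → c u ≠ c w

/-- `G` is uniquely `(f,t)`-list colorable. -/
def UniqFT (G : SimpleGraph V) [Fintype V] (f : V → ℕ) (t : ℕ) : Prop :=
  ∃ L : V → Finset ℕ, (∀ v, (L v).card = f v) ∧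
    (Finset.univ.biUnion L).card = t ∧ ∃! c, IsLC G L c

/-- `G` is uniquely `(k,t)`-list colorable. -/
def UniqKT (G : SimpleGraph V) [Fintype V] (k t : ℕ) : Prop :=
  UniqFT G (fun _ => k) t

/-- `G` is uniquely `k`-list colorable (no restriction on total number of colors). -/
def UniqK (G : SimpleGraph V) (k : ℕ) : Prop :=
  ∃ L : V → Finset ℕ, (∀ v, (L v).card = k) ∧ ∃! c, IsLC G L c

/-- The chromatic number as a natural number. -/
noncomputable def chrom (G : SimpleGraph V) : ℕ := sInf {n | G.Colorable n}

/-- A graph has no cut vertex: deleting any single vertex leaves it connected. -/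
def NoCutVtx {W : Type*} (H : SimpleGraph W) : Prop :=
  ∀ w : W, ((⊤ : H.Subgraph).deleteVerts {w}).coe.Connected

/-- `G` is 2-connected: at least 3 vertices and no cut vertex. -/
def TwoConn (G : SimpleGraph V) [Fintype V] : Prop :=
  3 ≤ Fintype.card V ∧ G.Connected ∧ NoCutVtx G

/-- `B` is (the vertex set of) a block of `G`: a maximal set inducing a
connected subgraph with no cut vertex. -/
def IsBlock (G : SimpleGraph V) (B : Finset V) : Prop :=
  (G.induce (↑B : Set V)).Connected ∧ NoCutVtx (G.induce (↑B : Set V)) ∧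
    ∀ B' : Finset V, B ⊆ B' → (G.induce (↑B' : Set V)).Connected →
      NoCutVtx (G.induce (↑B' : Set V)) → B' = B

/-- `H` is a theta graph `θ_{p,q,r}`: three internally disjoint paths of
lengths `p`, `q`, `r` between two common endpoints, covering all vertices
and edges of `H`. -/
def IsTheta {W : Type*} (H : SimpleGraph W) (p q r : ℕ) : Prop :=
  ∃ (u v : W) (P₁ P₂ P₃ : H.Walk u v),
    u ≠ v ∧ P₁.IsPath ∧ P₂.IsPath ∧ P₃.IsPath ∧
    P₁.length = p ∧ P₂.length = q ∧ P₃.length = r ∧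
    (∀ x, x ∈ P₁.support → x ∈ P₂.support → x = u ∨ x = v) ∧
    (∀ x, x ∈ P₁.support → x ∈ P₃.support → x = u ∨ x = v) ∧
    (∀ x, x ∈ P₂.support → x ∈ P₃.support → x = u ∨ x = v) ∧
    (∀ x, x ∈ P₁.support ∨ x ∈ P₂.support ∨ x ∈ P₃.support) ∧
    (∀ e ∈ H.edgeSet, e ∈ P₁.edges ∨ e ∈ P₂.edges ∨ e ∈ P₃.edges)

/-- `χ_u(G,k)`: the least `t` such that `G` is uniquely `(k,t)`-list colorable
(`0` if there is none, by convention of `sInf` on `ℕ`). -/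
noncomputable def chiU (G : SimpleGraph V) [Fintype V] (k : ℕ) : ℕ :=
  sInf {t | UniqKT G k t}

namespace ThetaAux

variable {V : Type*} {G : SimpleGraph V}

lemma getVert_mem_support {x y : V} (W : G.Walk x y) {i : ℕ} (hi : i ≤ W.length) :
    W.getVert i ∈ W.support :=
  SimpleGraph.Walk.mem_support_iff_exists_getVert.mpr ⟨i, rfl, hi⟩

lemma getVert_inj {x y : V} (W : G.Walk x y) :
    W.IsPath → ∀ i j : ℕ, i ≤ W.length → j ≤ W.length →
      W.getVert i = W.getVert j → i = j := by
  induction W with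
  | nil => intro _ i j hi hj _; simp at hi hj; omega
  | cons h w ih =>
    intro hW i j hi hj hij
    rw [SimpleGraph.Walk.cons_isPath_iff] at hW
    match i, j with
    | 0, 0 => rfl
    | 0, j+1 =>
      exfalso
      apply hW.2
      have : w.getVert j ∈ w.support :=
        getVert_mem_support w (by simp [SimpleGraph.Walk.length_cons] at hj; omega)
      rwa [← SimpleGraph.Walk.getVert_cons_succ (h := h), ← hij, SimpleGraph.Walk.getVert_zero] at this
    | i+1, 0 =>
      exfalso
      apply hW.2
      have : w.getVert i ∈ w.support :=
        getVert_mem_support w (by simp [SimpleGraph.Walk.length_cons] at hi; omega)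
      rwa [← SimpleGraph.Walk.getVert_cons_succ (h := h), hij, SimpleGraph.Walk.getVert_zero] at this
    | i+1, j+1 =>
      have := ih hW.1 i j (by simp [SimpleGraph.Walk.length_cons] at hi; omega)
        (by simp [SimpleGraph.Walk.length_cons] at hj; omega)
        (by rwa [SimpleGraph.Walk.getVert_cons_succ, SimpleGraph.Walk.getVert_cons_succ] at hij)
      omega

open Classical in
noncomputable def widx {x y : V} (W : G.Walk x y) (a : V) : ℕ :=
  if h : a ∈ W.support then (SimpleGraph.Walk.mem_support_iff_exists_getVert.mp h).choose else 0

lemma widx_spec {x y : V} {W : G.Walk x y} {a : V} (h : a ∈ W.support) :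
    W.getVert (widx W a) = a ∧ widx W a ≤ W.length := by
  classical
  rw [widx]
  rw [dif_pos h]
  exact (SimpleGraph.Walk.mem_support_iff_exists_getVert.mp h).choose_spec

lemma widx_getVert {x y : V} {W : G.Walk x y} (hW : W.IsPath) {i : ℕ} (hi : i ≤ W.length) :
    widx W (W.getVert i) = i := by
  obtain ⟨h1, h2⟩ := widx_spec (getVert_mem_support W hi)
  exact getVert_inj W hW _ _ h2 hi h1

lemma edges_getVert {x y : V} (W : G.Walk x y) :
    ∀ e ∈ W.edges, ∃ i, i < W.length ∧ e = s(W.getVert i, W.getVert (i+1)) := by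
  induction W with
  | nil => simp
  | cons h w ih =>
    intro e he
    rw [SimpleGraph.Walk.edges_cons, List.mem_cons] at he
    rcases he with he | he
    · exact ⟨0, by simp [SimpleGraph.Walk.length_cons],
        by rw [he]; simp [SimpleGraph.Walk.getVert_zero, SimpleGraph.Walk.getVert_cons_succ]⟩
    · obtain ⟨i, hi, hei⟩ := ih e he
      exact ⟨i+1, by simp [SimpleGraph.Walk.length_cons]; omega,
        by rw [hei, SimpleGraph.Walk.getVert_cons_succ, SimpleGraph.Walk.getVert_cons_succ]⟩

lemma chain {x y : V} (W : G.Walk x y) {c' : V → ℕ}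
    (hprop : ∀ ⦃a b⦄, G.Adj a b → c' a ≠ c' b) (B : ℕ → ℕ) {s k : ℕ} (hk : k ≤ W.length)
    (h0 : c' (W.getVert s) = B s)
    (hmem : ∀ i, s ≤ i → i < k → c' (W.getVert (i+1)) ∈ ({B i, B (i+1)} : Finset ℕ)) :
    ∀ i, s ≤ i → i ≤ k → c' (W.getVert i) = B i := by
  intro i hsi
  induction i, hsi using Nat.le_induction with
  | base => intro _; exact h0
  | succ n hn ihn =>
    intro hnk
    have hlt : n < k := by omega
    have hadj := W.adj_getVert_succ (lt_of_lt_of_le hlt hk)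
    have hne := hprop hadj
    have hm := hmem n hn hlt
    rw [Finset.mem_insert, Finset.mem_singleton] at hm
    rcases hm with hm | hm
    · exact absurd ((ihn (by omega)).trans hm.symm) hne
    · exact hm

lemma chain_clash {x y : V} (W : G.Walk x y) {c' : V → ℕ}
    (hprop : ∀ ⦃a b⦄, G.Adj a b → c' a ≠ c' b) (B : ℕ → ℕ) {s : ℕ}
    (hlen : 0 < W.length) (hs : s ≤ W.length - 1)
    (h0 : c' (W.getVert s) = B s)
    (hmem : ∀ i, s ≤ i → i < W.length - 1 →
      c' (W.getVert (i+1)) ∈ ({B i, B (i+1)} : Finset ℕ))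
    (hclash : B (W.length - 1) = c' y) : False := by
  have hlast := chain W hprop B (k := W.length - 1) (by omega) h0 hmem (W.length - 1) hs le_rfl
  have hadj : G.Adj (W.getVert (W.length - 1)) (W.getVert (W.length - 1 + 1)) :=
    W.adj_getVert_succ (by omega)
  have he : W.length - 1 + 1 = W.length := by omega
  rw [he, SimpleGraph.Walk.getVert_length] at hadj
  exact hprop hadj (hlast.trans (hclash.trans rfl))


open Classical in
noncomputable def thetaFun {u v : V} (P₁ P₂ P₃ : G.Walk u v) {α : Type*}
    (f₁ f₂ f₃ : ℕ → α) (a : V) : α :=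
  if a ∈ P₁.support then f₁ (widx P₁ a)
  else if a ∈ P₂.support then f₂ (widx P₂ a)
  else f₃ (widx P₃ a)

variable {u v : V} {P₁ P₂ P₃ : G.Walk u v} {α : Type*} {f₁ f₂ f₃ : ℕ → α}

lemma thetaFun_eval₁ (h₁ : P₁.IsPath) {i : ℕ} (hi : i ≤ P₁.length) :
    thetaFun P₁ P₂ P₃ f₁ f₂ f₃ (P₁.getVert i) = f₁ i := by
  classical
  rw [thetaFun, if_pos (getVert_mem_support P₁ hi), widx_getVert h₁ hi]

lemma thetaFun_u (h₁ : P₁.IsPath) : thetaFun P₁ P₂ P₃ f₁ f₂ f₃ u = f₁ 0 := by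
  have := thetaFun_eval₁ (P₂ := P₂) (P₃ := P₃) (f₁ := f₁) (f₂ := f₂) (f₃ := f₃)
    h₁ (Nat.zero_le P₁.length)
  rwa [SimpleGraph.Walk.getVert_zero] at this

lemma thetaFun_v (h₁ : P₁.IsPath) : thetaFun P₁ P₂ P₃ f₁ f₂ f₃ v = f₁ P₁.length := by
  have := thetaFun_eval₁ (P₂ := P₂) (P₃ := P₃) (f₁ := f₁) (f₂ := f₂) (f₃ := f₃)
    h₁ (le_refl P₁.length)
  rwa [SimpleGraph.Walk.getVert_length] at this

lemma thetaFun_eval₂ (h₁ : P₁.IsPath) (h₂ : P₂.IsPath)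
    (hd : ∀ x, x ∈ P₁.support → x ∈ P₂.support → x = u ∨ x = v)
    (h0 : f₁ 0 = f₂ 0) (hL : f₁ P₁.length = f₂ P₂.length)
    {i : ℕ} (hi : i ≤ P₂.length) :
    thetaFun P₁ P₂ P₃ f₁ f₂ f₃ (P₂.getVert i) = f₂ i := by
  classical
  by_cases hmem : P₂.getVert i ∈ P₁.support
  · rcases hd _ hmem (getVert_mem_support P₂ hi) with hx | hx
    · have hi0 : i = 0 := getVert_inj P₂ h₂ i 0 hi (Nat.zero_le _)
        (by rw [hx, SimpleGraph.Walk.getVert_zero])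
      rw [hi0] at hx ⊢
      rw [SimpleGraph.Walk.getVert_zero, thetaFun_u h₁, h0]
    · have hiL : i = P₂.length := getVert_inj P₂ h₂ i P₂.length hi le_rfl
        (by rw [hx, SimpleGraph.Walk.getVert_length])
      rw [hiL] at hx ⊢
      rw [SimpleGraph.Walk.getVert_length, thetaFun_v h₁, hL]
  · rw [thetaFun, if_neg hmem, if_pos (getVert_mem_support P₂ hi), widx_getVert h₂ hi]

lemma thetaFun_eval₃ (h₁ : P₁.IsPath) (h₂ : P₂.IsPath) (h₃ : P₃.IsPath)
    (hd13 : ∀ x, x ∈ P₁.support → x ∈ P₃.support → x = u ∨ x = v)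
    (hd23 : ∀ x, x ∈ P₂.support → x ∈ P₃.support → x = u ∨ x = v)
    (h0 : f₁ 0 = f₂ 0) (hL : f₁ P₁.length = f₂ P₂.length)
    (h0' : f₁ 0 = f₃ 0) (hL' : f₁ P₁.length = f₃ P₃.length)
    {i : ℕ} (hi : i ≤ P₃.length) :
    thetaFun P₁ P₂ P₃ f₁ f₂ f₃ (P₃.getVert i) = f₃ i := by
  classical
  have hxu : P₃.getVert i = u ∨ P₃.getVert i = v →
      thetaFun P₁ P₂ P₃ f₁ f₂ f₃ (P₃.getVert i) = f₃ i := by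
    rintro (hx | hx)
    · have hi0 : i = 0 := getVert_inj P₃ h₃ i 0 hi (Nat.zero_le _)
        (by rw [hx, SimpleGraph.Walk.getVert_zero])
      rw [hi0] at hx ⊢
      rw [SimpleGraph.Walk.getVert_zero, thetaFun_u h₁, h0']
    · have hiL : i = P₃.length := getVert_inj P₃ h₃ i P₃.length hi le_rfl
        (by rw [hx, SimpleGraph.Walk.getVert_length])
      rw [hiL] at hx ⊢
      rw [SimpleGraph.Walk.getVert_length, thetaFun_v h₁, hL']
  by_cases hmem : P₃.getVert i ∈ P₁.support
  · exact hxu (hd13 _ hmem (getVert_mem_support P₃ hi))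
  · by_cases hmem2 : P₃.getVert i ∈ P₂.support
    · exact hxu (hd23 _ hmem2 (getVert_mem_support P₃ hi))
    · rw [thetaFun, if_neg hmem, if_neg hmem2, widx_getVert h₃ hi]

/-- alternating pattern -/
def alt {α : Type*} (a b : α) (i : ℕ) : α := if i % 2 = 0 then a else b

lemma alt_even {α : Type*} {a b : α} {i : ℕ} (h : i % 2 = 0) : alt a b i = a := if_pos h

lemma alt_odd {α : Type*} {a b : α} {i : ℕ} (h : i % 2 = 1) : alt a b i = b := by
  rw [alt, if_neg]; omega

lemma alt_pair (a b : ℕ) (i : ℕ) :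
    ({alt a b i, alt a b (i+1)} : Finset ℕ) = {a, b} := by
  rcases Nat.mod_two_eq_zero_or_one i with h | h
  · rw [alt_even h, alt_odd (by omega)]
  · rw [alt_odd h, alt_even (by omega), Finset.pair_comm]

lemma alt_ne {a b : ℕ} (h : a ≠ b) (i : ℕ) : alt a b i ≠ alt a b (i+1) := by
  rcases Nat.mod_two_eq_zero_or_one i with hp | hp
  · rw [alt_even hp, alt_odd (by omega)]; exact h
  · rw [alt_odd hp, alt_even (by omega)]; exact h.symm

/-- pattern with a final override -/
def pat {α : Type*} (len : ℕ) (cv : α) (f : ℕ → α) (i : ℕ) : α := if i = len then cv else f i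

lemma pat_len {α : Type*} {len : ℕ} {cv : α} {f : ℕ → α} : pat len cv f len = cv := if_pos rfl

lemma pat_ne {α : Type*} {len : ℕ} {cv : α} {f : ℕ → α} {i : ℕ} (h : i ≠ len) :
    pat len cv f i = f i := if_neg h


variable {V : Type*} {G : SimpleGraph V} {u v : V} {P₁ P₂ P₃ : G.Walk u v}

lemma build [Fintype V] (G : SimpleGraph V) {u v : V} {P₁ P₂ P₃ : G.Walk u v}
    (h₁ : P₁.IsPath) (h₂ : P₂.IsPath) (h₃ : P₃.IsPath)
    (hd12 : ∀ x, x ∈ P₁.support → x ∈ P₂.support → x = u ∨ x = v)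
    (hd13 : ∀ x, x ∈ P₁.support → x ∈ P₃.support → x = u ∨ x = v)
    (hd23 : ∀ x, x ∈ P₂.support → x ∈ P₃.support → x = u ∨ x = v)
    (hcov : ∀ x, x ∈ P₁.support ∨ x ∈ P₂.support ∨ x ∈ P₃.support)
    (hedge : ∀ e ∈ G.edgeSet, e ∈ P₁.edges ∨ e ∈ P₂.edges ∨ e ∈ P₃.edges)
    (f₁ f₂ f₃ : ℕ → ℕ) (g₁ g₂ g₃ : ℕ → Finset ℕ)
    (hf0 : f₁ 0 = f₂ 0) (hfL : f₁ P₁.length = f₂ P₂.length)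
    (hf0' : f₁ 0 = f₃ 0) (hfL' : f₁ P₁.length = f₃ P₃.length)
    (hg0 : g₁ 0 = g₂ 0) (hgL : g₁ P₁.length = g₂ P₂.length)
    (hg0' : g₁ 0 = g₃ 0) (hgL' : g₁ P₁.length = g₃ P₃.length)
    (hcard₁ : ∀ i, (g₁ i).card = 2) (hcard₂ : ∀ i, (g₂ i).card = 2)
    (hcard₃ : ∀ i, (g₃ i).card = 2)
    (hsub₁ : ∀ i, g₁ i ⊆ {0,1,2}) (hsub₂ : ∀ i, g₂ i ⊆ {0,1,2})
    (hsub₃ : ∀ i, g₃ i ⊆ {0,1,2})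
    (hgu : g₁ 0 = {0,1}) (hgv : g₁ P₁.length = {0,2})
    (hm₁ : ∀ i ≤ P₁.length, f₁ i ∈ g₁ i) (hm₂ : ∀ i ≤ P₂.length, f₂ i ∈ g₂ i)
    (hm₃ : ∀ i ≤ P₃.length, f₃ i ∈ g₃ i)
    (ha₁ : ∀ i < P₁.length, f₁ i ≠ f₁ (i+1)) (ha₂ : ∀ i < P₂.length, f₂ i ≠ f₂ (i+1))
    (ha₃ : ∀ i < P₃.length, f₃ i ≠ f₃ (i+1))
    (huniq : ∀ c', IsLC G (thetaFun P₁ P₂ P₃ g₁ g₂ g₃) c' →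
      c' = thetaFun P₁ P₂ P₃ f₁ f₂ f₃) :
    UniqKT G 2 3 := by
  classical
  refine ⟨thetaFun P₁ P₂ P₃ g₁ g₂ g₃, ?_, ?_, ?_⟩
  · intro x
    rw [thetaFun]
    split_ifs
    exacts [hcard₁ _, hcard₂ _, hcard₃ _]
  · have hLu : thetaFun P₁ P₂ P₃ g₁ g₂ g₃ u = {0,1} := (thetaFun_u h₁).trans hgu
    have hLv : thetaFun P₁ P₂ P₃ g₁ g₂ g₃ v = {0,2} := (thetaFun_v h₁).trans hgv
    have hset : Finset.univ.biUnion (thetaFun P₁ P₂ P₃ g₁ g₂ g₃) = {0,1,2} := by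
      apply subset_antisymm
      · intro a ha
        rw [Finset.mem_biUnion] at ha
        obtain ⟨x, _, hax⟩ := ha
        revert hax
        rw [thetaFun]
        split_ifs
        exacts [fun h => hsub₁ _ h, fun h => hsub₂ _ h, fun h => hsub₃ _ h]
      · intro a ha
        rw [Finset.mem_insert, Finset.mem_insert, Finset.mem_singleton] at ha
        rw [Finset.mem_biUnion]
        rcases ha with rfl | rfl | rfl
        · exact ⟨u, Finset.mem_univ u, by rw [hLu]; decide⟩
        · exact ⟨u, Finset.mem_univ u, by rw [hLu]; decide⟩
        · exact ⟨v, Finset.mem_univ v, by rw [hLv]; decide⟩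
    rw [hset]; decide
  · refine ⟨thetaFun P₁ P₂ P₃ f₁ f₂ f₃, ⟨?_, ?_⟩, huniq⟩
    · intro x
      rcases hcov x with hx | hx | hx <;>
        obtain ⟨i, hgvi, hi⟩ := SimpleGraph.Walk.mem_support_iff_exists_getVert.mp hx <;>
          rw [← hgvi]
      · rw [thetaFun_eval₁ h₁ hi, thetaFun_eval₁ h₁ hi]
        exact hm₁ i hi
      · rw [thetaFun_eval₂ h₁ h₂ hd12 hf0 hfL hi, thetaFun_eval₂ h₁ h₂ hd12 hg0 hgL hi]
        exact hm₂ i hi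
      · rw [thetaFun_eval₃ h₁ h₂ h₃ hd13 hd23 hf0 hfL hf0' hfL' hi,
          thetaFun_eval₃ h₁ h₂ h₃ hd13 hd23 hg0 hgL hg0' hgL' hi]
        exact hm₃ i hi
    · intro a b hadj
      rcases hedge s(a,b) ((SimpleGraph.mem_edgeSet G).mpr hadj) with he | he | he <;>
        obtain ⟨i, hi, hei⟩ := edges_getVert _ _ he <;>
          rcases Sym2.eq_iff.mp hei with ⟨rfl, rfl⟩ | ⟨rfl, rfl⟩
      · rw [thetaFun_eval₁ h₁ (le_of_lt hi), thetaFun_eval₁ h₁ (by omega)]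
        exact ha₁ i hi
      · rw [thetaFun_eval₁ h₁ (le_of_lt hi), thetaFun_eval₁ h₁ (by omega)]
        exact (ha₁ i hi).symm
      · rw [thetaFun_eval₂ h₁ h₂ hd12 hf0 hfL (le_of_lt hi),
          thetaFun_eval₂ h₁ h₂ hd12 hf0 hfL (by omega : i + 1 ≤ P₂.length)]
        exact ha₂ i hi
      · rw [thetaFun_eval₂ h₁ h₂ hd12 hf0 hfL (le_of_lt hi),
          thetaFun_eval₂ h₁ h₂ hd12 hf0 hfL (by omega : i + 1 ≤ P₂.length)]
        exact (ha₂ i hi).symm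
      · rw [thetaFun_eval₃ h₁ h₂ h₃ hd13 hd23 hf0 hfL hf0' hfL' (le_of_lt hi),
          thetaFun_eval₃ h₁ h₂ h₃ hd13 hd23 hf0 hfL hf0' hfL' (by omega : i + 1 ≤ P₃.length)]
        exact ha₃ i hi
      · rw [thetaFun_eval₃ h₁ h₂ h₃ hd13 hd23 hf0 hfL hf0' hfL' (le_of_lt hi),
          thetaFun_eval₃ h₁ h₂ h₃ hd13 hd23 hf0 hfL hf0' hfL' (by omega : i + 1 ≤ P₃.length)]
        exact (ha₃ i hi).symm

-- SCHEME A : p,q even (≥2), r odd (possibly 1). Unique coloring: u=1, v=2.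
variable {V : Type*} {G : SimpleGraph V}

lemma schemeA [Fintype V] (G : SimpleGraph V) (p q r : ℕ)
    (hθ : IsTheta G p q r) (hp : p % 2 = 0) (hp0 : 0 < p)
    (hq : q % 2 = 0) (hq0 : 0 < q) (hr : r % 2 = 1) :
    UniqKT G 2 3 := by
  classical
  obtain ⟨u, v, P₁, P₂, P₃, huv, h₁, h₂, h₃, hl₁, hl₂, hl₃, hd12, hd13, hd23, hcov, hedge⟩ := hθ
  subst hl₁; subst hl₂; subst hl₃
  have hr0 : 0 < P₃.length := by omega
  -- patterns
  refine build G h₁ h₂ h₃ hd12 hd13 hd23 hcov hedge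
    (pat P₁.length 2 (alt 1 0))
    (pat P₂.length 2 (fun i => if i = 0 then 1 else alt 2 0 i))
    (pat P₃.length 2 (alt 1 0))
    (pat P₁.length {0,2} (fun _ => {0,1}))
    (pat P₂.length {0,2} (fun i => if i = 0 then {0,1} else {0,2}))
    (pat P₃.length {0,2} (fun _ => {0,1}))
    ?_ ?_ ?_ ?_ ?_ ?_ ?_ ?_ ?_ ?_ ?_ ?_ ?_ ?_ ?_ ?_ ?_ ?_ ?_ ?_ ?_ ?_ ?_
  · rw [pat_ne (by omega), pat_ne (by omega)] <;> rfl
  · rw [pat_len, pat_len]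
  · rw [pat_ne (by omega), pat_ne (by omega)] <;> rfl
  · rw [pat_len, pat_len]
  · rw [pat_ne (by omega), pat_ne (by omega)] <;> rfl
  · rw [pat_len, pat_len]
  · rw [pat_ne (by omega), pat_ne (by omega)] <;> rfl
  · rw [pat_len, pat_len]
  · intro i; simp only [pat]; split_ifs <;> decide
  · intro i; simp only [pat]; split_ifs <;> decide
  · intro i; simp only [pat]; split_ifs <;> decide
  · intro i; simp only [pat]; split_ifs <;> decide
  · intro i; simp only [pat]; split_ifs <;> decide
  · intro i; simp only [pat]; split_ifs <;> decide
  · rw [pat_ne (by omega)]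
  · rw [pat_len]
  · intro i _; simp only [pat, alt]; split_ifs <;> decide
  · intro i _; simp only [pat, alt]; split_ifs <;> decide
  · intro i _; simp only [pat, alt]; split_ifs <;> decide
  · intro i hi; simp only [pat, alt]; split_ifs <;> first | decide | omega | exact False.elim (by assumption)
  · intro i hi; simp only [pat, alt]; split_ifs <;> first | decide | omega | exact False.elim (by assumption)
  · intro i hi; simp only [pat, alt]; split_ifs <;> first | decide | omega | exact False.elim (by assumption)
  -- uniqueness
  · intro c' hc'
    obtain ⟨hcm, hcp⟩ := hc'
    have hL₁ : ∀ i ≤ P₁.length, thetaFun P₁ P₂ P₃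
        (pat P₁.length {0,2} (fun _ => {0,1}))
        (pat P₂.length {0,2} (fun i => if i = 0 then {0,1} else {0,2}))
        (pat P₃.length {0,2} (fun _ => {0,1})) (P₁.getVert i)
        = pat P₁.length ({0,2} : Finset ℕ) (fun _ => {0,1}) i :=
      fun i hi => thetaFun_eval₁ h₁ hi
    have hL₂ : ∀ i ≤ P₂.length, thetaFun P₁ P₂ P₃
        (pat P₁.length {0,2} (fun _ => {0,1}))
        (pat P₂.length {0,2} (fun i => if i = 0 then {0,1} else {0,2}))
        (pat P₃.length {0,2} (fun _ => {0,1})) (P₂.getVert i)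
        = pat P₂.length ({0,2} : Finset ℕ) (fun i => if i = 0 then {0,1} else {0,2}) i :=
      fun i hi => thetaFun_eval₂ h₁ h₂ hd12
        (by rw [pat_ne (by omega), pat_ne (by omega)] <;> rfl) (by rw [pat_len, pat_len]) hi
    have hL₃ : ∀ i ≤ P₃.length, thetaFun P₁ P₂ P₃
        (pat P₁.length {0,2} (fun _ => {0,1}))
        (pat P₂.length {0,2} (fun i => if i = 0 then {0,1} else {0,2}))
        (pat P₃.length {0,2} (fun _ => {0,1})) (P₃.getVert i)
        = pat P₃.length ({0,2} : Finset ℕ) (fun _ => {0,1}) i :=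
      fun i hi => thetaFun_eval₃ h₁ h₂ h₃ hd13 hd23
        (by rw [pat_ne (by omega), pat_ne (by omega)] <;> rfl) (by rw [pat_len, pat_len])
        (by rw [pat_ne (by omega), pat_ne (by omega)] <;> rfl) (by rw [pat_len, pat_len]) hi
    have hu' : c' u = 0 ∨ c' u = 1 := by
      have hm := hcm u
      rw [thetaFun_u h₁, pat_ne (by omega)] at hm
      simpa using hm
    have hv' : c' v = 0 ∨ c' v = 2 := by
      have hm := hcm v
      rw [thetaFun_v h₁, pat_len] at hm
      simpa using hm
    rcases hu' with hu0 | hu1 <;> rcases hv' with hv0 | hv2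
    -- combo (0,0) : clash along P₃
    · exfalso
      refine chain_clash P₃ hcp (alt 0 1) hr0 (Nat.zero_le _)
        (by rw [SimpleGraph.Walk.getVert_zero, alt_even rfl]; exact hu0) ?_ ?_
      · intro i _ hik
        have hm := hcm (P₃.getVert (i+1))
        rw [hL₃ (i+1) (by omega), pat_ne (by omega)] at hm
        rwa [alt_pair]
      · rw [alt_even (by omega)]; exact hv0.symm
    -- combo (0,2) : clash along P₂
    · exfalso
      refine chain_clash P₂ hcp (alt 0 2) (by omega) (Nat.zero_le _)
        (by rw [SimpleGraph.Walk.getVert_zero, alt_even rfl]; exact hu0) ?_ ?_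
      · intro i _ hik
        have hm := hcm (P₂.getVert (i+1))
        rw [hL₂ (i+1) (by omega), pat_ne (by omega), if_neg (by omega)] at hm
        rwa [alt_pair]
      · rw [alt_odd (by omega)]; exact hv2.symm
    -- combo (1,0) : clash along P₁
    · exfalso
      refine chain_clash P₁ hcp (alt 1 0) (by omega) (Nat.zero_le _)
        (by rw [SimpleGraph.Walk.getVert_zero, alt_even rfl]; exact hu1) ?_ ?_
      · intro i _ hik
        have hm := hcm (P₁.getVert (i+1))
        rw [hL₁ (i+1) (by omega), pat_ne (by omega)] at hm
        rwa [alt_pair, Finset.pair_comm]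
      · rw [alt_odd (by omega)]; exact hv0.symm
    -- combo (1,2) : the unique coloring
    · have ch1 : ∀ i ≤ P₁.length - 1, c' (P₁.getVert i) = alt 1 0 i := by
        refine fun i hi => chain P₁ hcp (alt 1 0) (s := 0) (k := P₁.length - 1) (by omega)
          (by rw [SimpleGraph.Walk.getVert_zero, alt_even rfl]; exact hu1) ?_ i (Nat.zero_le _) hi
        intro i _ hik
        have hm := hcm (P₁.getVert (i+1))
        rw [hL₁ (i+1) (by omega), pat_ne (by omega)] at hm
        rwa [alt_pair, Finset.pair_comm]
      have ch3 : ∀ i ≤ P₃.length - 1, c' (P₃.getVert i) = alt 1 0 i := by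
        refine fun i hi => chain P₃ hcp (alt 1 0) (s := 0) (k := P₃.length - 1) (by omega)
          (by rw [SimpleGraph.Walk.getVert_zero, alt_even rfl]; exact hu1) ?_ i (Nat.zero_le _) hi
        intro i _ hik
        have hm := hcm (P₃.getVert (i+1))
        rw [hL₃ (i+1) (by omega), pat_ne (by omega)] at hm
        rwa [alt_pair, Finset.pair_comm]
      have ch2 : ∀ i ≤ P₂.length - 1, c' (P₂.reverse.getVert i) = alt 2 0 i := by
        refine fun i hi => chain P₂.reverse hcp (alt 2 0) (s := 0) (k := P₂.length - 1)
          (by rw [SimpleGraph.Walk.length_reverse]; omega)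
          (by rw [SimpleGraph.Walk.getVert_zero, alt_even rfl]; exact hv2) ?_ i (Nat.zero_le _) hi
        intro i _ hik
        have hm := hcm (P₂.reverse.getVert (i+1))
        rw [SimpleGraph.Walk.getVert_reverse,
          hL₂ (P₂.length - (i+1)) (by omega), pat_ne (by omega), if_neg (by omega)] at hm
        rw [alt_pair, Finset.pair_comm, SimpleGraph.Walk.getVert_reverse]
        exact hm
      have H₁ : ∀ i ≤ P₁.length, c' (P₁.getVert i) = pat P₁.length 2 (alt 1 0) i := by
        intro i hi
        by_cases hiL : i = P₁.length
        · rw [hiL, SimpleGraph.Walk.getVert_length, pat_len]; exact hv2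
        · rw [pat_ne hiL]; exact ch1 i (by omega)
      have H₃ : ∀ i ≤ P₃.length, c' (P₃.getVert i) = pat P₃.length 2 (alt 1 0) i := by
        intro i hi
        by_cases hiL : i = P₃.length
        · rw [hiL, SimpleGraph.Walk.getVert_length, pat_len]; exact hv2
        · rw [pat_ne hiL]; exact ch3 i (by omega)
      have H₂ : ∀ i ≤ P₂.length,
          c' (P₂.getVert i) = pat P₂.length 2 (fun i => if i = 0 then 1 else alt 2 0 i) i := by
        intro i hi
        by_cases hiL : i = P₂.length
        · rw [hiL, SimpleGraph.Walk.getVert_length, pat_len]; exact hv2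
        · rw [pat_ne hiL]
          by_cases hi0 : i = 0
          · rw [hi0, if_pos rfl, SimpleGraph.Walk.getVert_zero]; exact hu1
          · rw [if_neg hi0]
            have := ch2 (P₂.length - i) (by omega)
            rw [SimpleGraph.Walk.getVert_reverse] at this
            have he : P₂.length - (P₂.length - i) = i := by omega
            rw [he] at this
            rw [this]
            rcases Nat.mod_two_eq_zero_or_one i with hpar | hpar
            · rw [alt_even hpar, alt_even (by omega)]
            · rw [alt_odd hpar, alt_odd (by omega)]
      funext x
      rcases hcov x with hx | hx | hx <;>
        obtain ⟨i, hgvi, hi⟩ := SimpleGraph.Walk.mem_support_iff_exists_getVert.mp hx <;>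
          rw [← hgvi]
      · rw [thetaFun_eval₁ h₁ hi]; exact H₁ i hi
      · rw [thetaFun_eval₂ h₁ h₂ hd12
          (by rw [pat_ne (by omega), pat_ne (by omega)] <;> rfl) (by rw [pat_len, pat_len]) hi]
        exact H₂ i hi
      · rw [thetaFun_eval₃ h₁ h₂ h₃ hd13 hd23
          (by rw [pat_ne (by omega), pat_ne (by omega)] <;> rfl) (by rw [pat_len, pat_len])
          (by rw [pat_ne (by omega), pat_ne (by omega)] <;> rfl) (by rw [pat_len, pat_len]) hi]
        exact H₃ i hi

-- SCHEME B : p odd >=3 (last internal {0,2}), q odd (maybe 1), r even >=2. Coloring u=0, v=2.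

lemma schemeB {V : Type*} [Fintype V] (G : SimpleGraph V) (p q r : ℕ)
    (hθ : IsTheta G p q r) (hp : p % 2 = 1) (hp3 : 1 < p)
    (hq : q % 2 = 1) (hr : r % 2 = 0) (hr0 : 0 < r) :
    UniqKT G 2 3 := by
  classical
  obtain ⟨u, v, P₁, P₂, P₃, huv, h₁, h₂, h₃, hl₁, hl₂, hl₃, hd12, hd13, hd23, hcov, hedge⟩ := hθ
  subst hl₁; subst hl₂; subst hl₃
  have hq0 : 0 < P₂.length := by omega
  refine build G h₁ h₂ h₃ hd12 hd13 hd23 hcov hedge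
    (pat P₁.length 2 (alt 0 1))
    (pat P₂.length 2 (alt 0 1))
    (pat P₃.length 2 (alt 0 1))
    (pat P₁.length {0,2} (fun i => if i = P₁.length - 1 then {0,2} else {0,1}))
    (pat P₂.length {0,2} (fun _ => {0,1}))
    (pat P₃.length {0,2} (fun _ => {0,1}))
    ?_ ?_ ?_ ?_ ?_ ?_ ?_ ?_ ?_ ?_ ?_ ?_ ?_ ?_ ?_ ?_ ?_ ?_ ?_ ?_ ?_ ?_ ?_
  · rw [pat_ne (by omega), pat_ne (by omega)] <;> rfl
  · rw [pat_len, pat_len]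
  · rw [pat_ne (by omega), pat_ne (by omega)] <;> rfl
  · rw [pat_len, pat_len]
  · rw [pat_ne (by omega), pat_ne (by omega), if_neg (by omega)] <;> rfl
  · rw [pat_len, pat_len]
  · rw [pat_ne (by omega), pat_ne (by omega), if_neg (by omega)] <;> rfl
  · rw [pat_len, pat_len]
  · intro i; simp only [pat]; split_ifs <;> decide
  · intro i; simp only [pat]; split_ifs <;> decide
  · intro i; simp only [pat]; split_ifs <;> decide
  · intro i; simp only [pat]; split_ifs <;> decide
  · intro i; simp only [pat]; split_ifs <;> decide
  · intro i; simp only [pat]; split_ifs <;> decide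
  · rw [pat_ne (by omega), if_neg (by omega)]
  · rw [pat_len]
  · intro i _; simp only [pat, alt]; split_ifs <;>
      first | decide | omega | exact False.elim (by assumption)
  · intro i _; simp only [pat, alt]; split_ifs <;>
      first | decide | omega | exact False.elim (by assumption)
  · intro i _; simp only [pat, alt]; split_ifs <;>
      first | decide | omega | exact False.elim (by assumption)
  · intro i hi; simp only [pat, alt]; split_ifs <;>
      first | decide | omega | exact False.elim (by assumption)
  · intro i hi; simp only [pat, alt]; split_ifs <;>
      first | decide | omega | exact False.elim (by assumption)
  · intro i hi; simp only [pat, alt]; split_ifs <;>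
      first | decide | omega | exact False.elim (by assumption)
  · intro c' hc'
    obtain ⟨hcm, hcp⟩ := hc'
    have hL₁ : ∀ i ≤ P₁.length, thetaFun P₁ P₂ P₃
        (pat P₁.length {0,2} (fun i => if i = P₁.length - 1 then {0,2} else {0,1}))
        (pat P₂.length {0,2} (fun _ => {0,1}))
        (pat P₃.length {0,2} (fun _ => {0,1})) (P₁.getVert i)
        = pat P₁.length ({0,2} : Finset ℕ)
            (fun i => if i = P₁.length - 1 then {0,2} else {0,1}) i :=
      fun i hi => thetaFun_eval₁ h₁ hi
    have hL₂ : ∀ i ≤ P₂.length, thetaFun P₁ P₂ P₃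
        (pat P₁.length {0,2} (fun i => if i = P₁.length - 1 then {0,2} else {0,1}))
        (pat P₂.length {0,2} (fun _ => {0,1}))
        (pat P₃.length {0,2} (fun _ => {0,1})) (P₂.getVert i)
        = pat P₂.length ({0,2} : Finset ℕ) (fun _ => {0,1}) i :=
      fun i hi => thetaFun_eval₂ h₁ h₂ hd12
        (by rw [pat_ne (by omega), pat_ne (by omega), if_neg (by omega)] <;> rfl)
        (by rw [pat_len, pat_len]) hi
    have hL₃ : ∀ i ≤ P₃.length, thetaFun P₁ P₂ P₃
        (pat P₁.length {0,2} (fun i => if i = P₁.length - 1 then {0,2} else {0,1}))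
        (pat P₂.length {0,2} (fun _ => {0,1}))
        (pat P₃.length {0,2} (fun _ => {0,1})) (P₃.getVert i)
        = pat P₃.length ({0,2} : Finset ℕ) (fun _ => {0,1}) i :=
      fun i hi => thetaFun_eval₃ h₁ h₂ h₃ hd13 hd23
        (by rw [pat_ne (by omega), pat_ne (by omega), if_neg (by omega)] <;> rfl)
        (by rw [pat_len, pat_len])
        (by rw [pat_ne (by omega), pat_ne (by omega), if_neg (by omega)] <;> rfl)
        (by rw [pat_len, pat_len]) hi
    have hu' : c' u = 0 ∨ c' u = 1 := by
      have hm := hcm u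
      rw [thetaFun_u h₁, pat_ne (by omega), if_neg (by omega)] at hm
      simpa using hm
    have hv' : c' v = 0 ∨ c' v = 2 := by
      have hm := hcm v
      rw [thetaFun_v h₁, pat_len] at hm
      simpa using hm
    rcases hu' with hu0 | hu1 <;> rcases hv' with hv0 | hv2
    -- (0,0) : clash along P₂
    · exfalso
      refine chain_clash P₂ hcp (alt 0 1) hq0 (Nat.zero_le _)
        (by rw [SimpleGraph.Walk.getVert_zero, alt_even rfl]; exact hu0) ?_ ?_
      · intro i _ hik
        have hm := hcm (P₂.getVert (i+1))
        rw [hL₂ (i+1) (by omega), pat_ne (by omega)] at hm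
        rwa [alt_pair]
      · rw [alt_even (by omega)]; exact hv0.symm
    -- (0,2) : the unique coloring
    · have ch1 : ∀ i ≤ P₁.length - 2, c' (P₁.getVert i) = alt 0 1 i := by
        refine fun i hi => chain P₁ hcp (alt 0 1) (s := 0) (k := P₁.length - 2) (by omega)
          (by rw [SimpleGraph.Walk.getVert_zero, alt_even rfl]; exact hu0) ?_ i (Nat.zero_le _) hi
        intro i _ hik
        have hm := hcm (P₁.getVert (i+1))
        rw [hL₁ (i+1) (by omega), pat_ne (by omega), if_neg (by omega)] at hm
        rwa [alt_pair]
      have hsp : c' (P₁.getVert (P₁.length - 1)) = 0 := by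
        have hw := hcm (P₁.getVert (P₁.length - 1))
        rw [hL₁ (P₁.length - 1) (by omega), pat_ne (by omega), if_pos rfl] at hw
        have hadj2 : G.Adj (P₁.getVert (P₁.length - 1)) v := by
          have := P₁.adj_getVert_succ (show P₁.length - 1 < P₁.length by omega)
          rwa [show P₁.length - 1 + 1 = P₁.length by omega,
            SimpleGraph.Walk.getVert_length] at this
        have hne := hcp hadj2
        rw [hv2] at hne
        rw [Finset.mem_insert, Finset.mem_singleton] at hw
        rcases hw with hw | hw
        · exact hw
        · exact absurd hw (by simpa using hne)
      have H₁ : ∀ i ≤ P₁.length, c' (P₁.getVert i) = pat P₁.length 2 (alt 0 1) i := by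
        intro i hi
        by_cases hiL : i = P₁.length
        · rw [hiL, SimpleGraph.Walk.getVert_length, pat_len]; exact hv2
        · rw [pat_ne hiL]
          by_cases hiS : i = P₁.length - 1
          · rw [hiS] at *
            rw [alt_even (by omega)]
            exact hsp
          · exact ch1 i (by omega)
      have ch2 : ∀ i ≤ P₂.length - 1, c' (P₂.getVert i) = alt 0 1 i := by
        refine fun i hi => chain P₂ hcp (alt 0 1) (s := 0) (k := P₂.length - 1) (by omega)
          (by rw [SimpleGraph.Walk.getVert_zero, alt_even rfl]; exact hu0) ?_ i (Nat.zero_le _) hi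
        intro i _ hik
        have hm := hcm (P₂.getVert (i+1))
        rw [hL₂ (i+1) (by omega), pat_ne (by omega)] at hm
        rwa [alt_pair]
      have H₂ : ∀ i ≤ P₂.length, c' (P₂.getVert i) = pat P₂.length 2 (alt 0 1) i := by
        intro i hi
        by_cases hiL : i = P₂.length
        · rw [hiL, SimpleGraph.Walk.getVert_length, pat_len]; exact hv2
        · rw [pat_ne hiL]; exact ch2 i (by omega)
      have ch3 : ∀ i ≤ P₃.length - 1, c' (P₃.getVert i) = alt 0 1 i := by
        refine fun i hi => chain P₃ hcp (alt 0 1) (s := 0) (k := P₃.length - 1) (by omega)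
          (by rw [SimpleGraph.Walk.getVert_zero, alt_even rfl]; exact hu0) ?_ i (Nat.zero_le _) hi
        intro i _ hik
        have hm := hcm (P₃.getVert (i+1))
        rw [hL₃ (i+1) (by omega), pat_ne (by omega)] at hm
        rwa [alt_pair]
      have H₃ : ∀ i ≤ P₃.length, c' (P₃.getVert i) = pat P₃.length 2 (alt 0 1) i := by
        intro i hi
        by_cases hiL : i = P₃.length
        · rw [hiL, SimpleGraph.Walk.getVert_length, pat_len]; exact hv2
        · rw [pat_ne hiL]; exact ch3 i (by omega)
      funext x
      rcases hcov x with hx | hx | hx <;>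
        obtain ⟨i, hgvi, hi⟩ := SimpleGraph.Walk.mem_support_iff_exists_getVert.mp hx <;>
          rw [← hgvi]
      · rw [thetaFun_eval₁ h₁ hi]; exact H₁ i hi
      · rw [thetaFun_eval₂ h₁ h₂ hd12
          (by rw [pat_ne (by omega), pat_ne (by omega)] <;> rfl) (by rw [pat_len, pat_len]) hi]
        exact H₂ i hi
      · rw [thetaFun_eval₃ h₁ h₂ h₃ hd13 hd23
          (by rw [pat_ne (by omega), pat_ne (by omega)] <;> rfl) (by rw [pat_len, pat_len])
          (by rw [pat_ne (by omega), pat_ne (by omega)] <;> rfl) (by rw [pat_len, pat_len]) hi]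
        exact H₃ i hi
    -- (1,0) : clash along P₃
    · exfalso
      refine chain_clash P₃ hcp (alt 1 0) (by omega) (Nat.zero_le _)
        (by rw [SimpleGraph.Walk.getVert_zero, alt_even rfl]; exact hu1) ?_ ?_
      · intro i _ hik
        have hm := hcm (P₃.getVert (i+1))
        rw [hL₃ (i+1) (by omega), pat_ne (by omega)] at hm
        rwa [alt_pair, Finset.pair_comm]
      · rw [alt_odd (by omega)]; exact hv0.symm
    -- (1,2) : clash along P₁ via the special vertex
    · exfalso
      have ch1 : ∀ i ≤ P₁.length - 2, c' (P₁.getVert i) = alt 1 0 i := by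
        refine fun i hi => chain P₁ hcp (alt 1 0) (s := 0) (k := P₁.length - 2) (by omega)
          (by rw [SimpleGraph.Walk.getVert_zero, alt_even rfl]; exact hu1) ?_ i (Nat.zero_le _) hi
        intro i _ hik
        have hm := hcm (P₁.getVert (i+1))
        rw [hL₁ (i+1) (by omega), pat_ne (by omega), if_neg (by omega)] at hm
        rwa [alt_pair, Finset.pair_comm]
      have hw := hcm (P₁.getVert (P₁.length - 1))
      rw [hL₁ (P₁.length - 1) (by omega), pat_ne (by omega), if_pos rfl] at hw
      have hadj1 : G.Adj (P₁.getVert (P₁.length - 2)) (P₁.getVert (P₁.length - 1)) := by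
        have := P₁.adj_getVert_succ (show P₁.length - 2 < P₁.length by omega)
        rwa [show P₁.length - 2 + 1 = P₁.length - 1 by omega] at this
      have hadj2 : G.Adj (P₁.getVert (P₁.length - 1)) v := by
        have := P₁.adj_getVert_succ (show P₁.length - 1 < P₁.length by omega)
        rwa [show P₁.length - 1 + 1 = P₁.length by omega,
          SimpleGraph.Walk.getVert_length] at this
      have hprev : c' (P₁.getVert (P₁.length - 2)) = 0 := by
        have := ch1 (P₁.length - 2) le_rfl
        rwa [alt_odd (by omega)] at this
      have hne1 := hcp hadj1
      rw [hprev] at hne1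
      have hne2 := hcp hadj2
      rw [hv2] at hne2
      rw [Finset.mem_insert, Finset.mem_singleton] at hw
      rcases hw with hw | hw
      · exact hne1.symm hw
      · exact hne2 hw

-- SCHEME C : p odd >=3 (last internal {1,2}), q odd (maybe 1), r odd >=3 (first internal {1,2},
-- then {0,2}). Coloring u=1, v=2.

lemma schemeC {V : Type*} [Fintype V] (G : SimpleGraph V) (p q r : ℕ)
    (hθ : IsTheta G p q r) (hp : p % 2 = 1) (hp3 : 1 < p)
    (hq : q % 2 = 1) (hr : r % 2 = 1) (hr3 : 1 < r) :
    UniqKT G 2 3 := by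
  classical
  obtain ⟨u, v, P₁, P₂, P₃, huv, h₁, h₂, h₃, hl₁, hl₂, hl₃, hd12, hd13, hd23, hcov, hedge⟩ := hθ
  subst hl₁; subst hl₂; subst hl₃
  have hq0 : 0 < P₂.length := by omega
  refine build G h₁ h₂ h₃ hd12 hd13 hd23 hcov hedge
    (pat P₁.length 2 (alt 1 0))
    (pat P₂.length 2 (alt 1 0))
    (pat P₃.length 2 (fun i => if i = 0 then 1 else alt 0 2 i))
    (pat P₁.length {0,2} (fun i => if i = P₁.length - 1 then {1,2} else {0,1}))
    (pat P₂.length {0,2} (fun _ => {0,1}))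
    (pat P₃.length {0,2} (fun i => if i = 0 then {0,1} else if i = 1 then {1,2} else {0,2}))
    ?_ ?_ ?_ ?_ ?_ ?_ ?_ ?_ ?_ ?_ ?_ ?_ ?_ ?_ ?_ ?_ ?_ ?_ ?_ ?_ ?_ ?_ ?_
  · rw [pat_ne (by omega), pat_ne (by omega)] <;> rfl
  · rw [pat_len, pat_len]
  · rw [pat_ne (by omega), pat_ne (by omega)] <;> rfl
  · rw [pat_len, pat_len]
  · rw [pat_ne (by omega), pat_ne (by omega), if_neg (by omega)] <;> rfl
  · rw [pat_len, pat_len]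
  · rw [pat_ne (by omega), pat_ne (by omega), if_neg (by omega), if_pos rfl] <;> rfl
  · rw [pat_len, pat_len]
  · intro i; simp only [pat]; split_ifs <;> decide
  · intro i; simp only [pat]; split_ifs <;> decide
  · intro i; simp only [pat]; split_ifs <;> decide
  · intro i; simp only [pat]; split_ifs <;> decide
  · intro i; simp only [pat]; split_ifs <;> decide
  · intro i; simp only [pat]; split_ifs <;> decide
  · rw [pat_ne (by omega), if_neg (by omega)]
  · rw [pat_len]
  · intro i _; simp only [pat, alt]; split_ifs <;>
      first | decide | omega | exact False.elim (by assumption)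
  · intro i _; simp only [pat, alt]; split_ifs <;>
      first | decide | omega | exact False.elim (by assumption)
  · intro i _; simp only [pat, alt]; split_ifs <;>
      first | decide | omega | exact False.elim (by assumption)
  · intro i hi; simp only [pat, alt]; split_ifs <;>
      first | decide | omega | exact False.elim (by assumption)
  · intro i hi; simp only [pat, alt]; split_ifs <;>
      first | decide | omega | exact False.elim (by assumption)
  · intro i hi; simp only [pat, alt]; split_ifs <;>
      first | decide | omega | exact False.elim (by assumption)
  · intro c' hc'
    obtain ⟨hcm, hcp⟩ := hc'
    have hL₁ : ∀ i ≤ P₁.length, thetaFun P₁ P₂ P₃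
        (pat P₁.length {0,2} (fun i => if i = P₁.length - 1 then {1,2} else {0,1}))
        (pat P₂.length {0,2} (fun _ => {0,1}))
        (pat P₃.length {0,2} (fun i => if i = 0 then {0,1} else if i = 1 then {1,2} else {0,2}))
        (P₁.getVert i)
        = pat P₁.length ({0,2} : Finset ℕ)
            (fun i => if i = P₁.length - 1 then {1,2} else {0,1}) i :=
      fun i hi => thetaFun_eval₁ h₁ hi
    have hL₂ : ∀ i ≤ P₂.length, thetaFun P₁ P₂ P₃
        (pat P₁.length {0,2} (fun i => if i = P₁.length - 1 then {1,2} else {0,1}))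
        (pat P₂.length {0,2} (fun _ => {0,1}))
        (pat P₃.length {0,2} (fun i => if i = 0 then {0,1} else if i = 1 then {1,2} else {0,2}))
        (P₂.getVert i)
        = pat P₂.length ({0,2} : Finset ℕ) (fun _ => {0,1}) i :=
      fun i hi => thetaFun_eval₂ h₁ h₂ hd12
        (by rw [pat_ne (by omega), pat_ne (by omega), if_neg (by omega)] <;> rfl)
        (by rw [pat_len, pat_len]) hi
    have hL₃ : ∀ i ≤ P₃.length, thetaFun P₁ P₂ P₃
        (pat P₁.length {0,2} (fun i => if i = P₁.length - 1 then {1,2} else {0,1}))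
        (pat P₂.length {0,2} (fun _ => {0,1}))
        (pat P₃.length {0,2} (fun i => if i = 0 then {0,1} else if i = 1 then {1,2} else {0,2}))
        (P₃.getVert i)
        = pat P₃.length ({0,2} : Finset ℕ)
            (fun i => if i = 0 then {0,1} else if i = 1 then {1,2} else {0,2}) i :=
      fun i hi => thetaFun_eval₃ h₁ h₂ h₃ hd13 hd23
        (by rw [pat_ne (by omega), pat_ne (by omega), if_neg (by omega)] <;> rfl)
        (by rw [pat_len, pat_len])
        (by rw [pat_ne (by omega), pat_ne (by omega), if_neg (by omega), if_pos rfl] <;> rfl)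
        (by rw [pat_len, pat_len]) hi
    have hu' : c' u = 0 ∨ c' u = 1 := by
      have hm := hcm u
      rw [thetaFun_u h₁, pat_ne (by omega), if_neg (by omega)] at hm
      simpa using hm
    have hv' : c' v = 0 ∨ c' v = 2 := by
      have hm := hcm v
      rw [thetaFun_v h₁, pat_len] at hm
      simpa using hm
    -- the forced first internal vertex of P₃ when c' u = 1
    have hfirst : c' u = 1 → c' (P₃.getVert 1) = 2 := by
      intro hu1
      have hw := hcm (P₃.getVert 1)
      rw [hL₃ 1 (by omega), pat_ne (by omega), if_neg (by omega), if_pos rfl] at hw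
      have hadj0 : G.Adj u (P₃.getVert 1) := by
        have := P₃.adj_getVert_succ (show 0 < P₃.length by omega)
        rwa [SimpleGraph.Walk.getVert_zero] at this
      have hne := hcp hadj0
      rw [hu1] at hne
      rw [Finset.mem_insert, Finset.mem_singleton] at hw
      rcases hw with hw | hw
      · exact absurd hw.symm hne
      · exact hw
    rcases hu' with hu0 | hu1 <;> rcases hv' with hv0 | hv2
    -- (0,0) : clash along P₂
    · exfalso
      refine chain_clash P₂ hcp (alt 0 1) hq0 (Nat.zero_le _)
        (by rw [SimpleGraph.Walk.getVert_zero, alt_even rfl]; exact hu0) ?_ ?_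
      · intro i _ hik
        have hm := hcm (P₂.getVert (i+1))
        rw [hL₂ (i+1) (by omega), pat_ne (by omega)] at hm
        rwa [alt_pair]
      · rw [alt_even (by omega)]; exact hv0.symm
    -- (0,2) : clash along P₁ via the special vertex
    · exfalso
      have ch1 : ∀ i ≤ P₁.length - 2, c' (P₁.getVert i) = alt 0 1 i := by
        refine fun i hi => chain P₁ hcp (alt 0 1) (s := 0) (k := P₁.length - 2) (by omega)
          (by rw [SimpleGraph.Walk.getVert_zero, alt_even rfl]; exact hu0) ?_ i (Nat.zero_le _) hi
        intro i _ hik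
        have hm := hcm (P₁.getVert (i+1))
        rw [hL₁ (i+1) (by omega), pat_ne (by omega), if_neg (by omega)] at hm
        rwa [alt_pair]
      have hw := hcm (P₁.getVert (P₁.length - 1))
      rw [hL₁ (P₁.length - 1) (by omega), pat_ne (by omega), if_pos rfl] at hw
      have hadj1 : G.Adj (P₁.getVert (P₁.length - 2)) (P₁.getVert (P₁.length - 1)) := by
        have := P₁.adj_getVert_succ (show P₁.length - 2 < P₁.length by omega)
        rwa [show P₁.length - 2 + 1 = P₁.length - 1 by omega] at this
      have hadj2 : G.Adj (P₁.getVert (P₁.length - 1)) v := by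
        have := P₁.adj_getVert_succ (show P₁.length - 1 < P₁.length by omega)
        rwa [show P₁.length - 1 + 1 = P₁.length by omega,
          SimpleGraph.Walk.getVert_length] at this
      have hprev : c' (P₁.getVert (P₁.length - 2)) = 1 := by
        have := ch1 (P₁.length - 2) le_rfl
        rwa [alt_odd (by omega)] at this
      have hne1 := hcp hadj1
      rw [hprev] at hne1
      have hne2 := hcp hadj2
      rw [hv2] at hne2
      rw [Finset.mem_insert, Finset.mem_singleton] at hw
      rcases hw with hw | hw
      · exact hne1.symm hw
      · exact hne2 hw
    -- (1,0) : clash along P₃ starting from the forced first internal vertex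
    · exfalso
      refine chain_clash P₃ hcp (alt 0 2) (by omega) (show 1 ≤ P₃.length - 1 by omega)
        (by rw [alt_odd rfl]; exact hfirst hu1) ?_ ?_
      · intro i hi1 hik
        have hm := hcm (P₃.getVert (i+1))
        rw [hL₃ (i+1) (by omega), pat_ne (by omega), if_neg (by omega),
          if_neg (by omega)] at hm
        rwa [alt_pair]
      · rw [alt_even (by omega)]; exact hv0.symm
    -- (1,2) : the unique coloring
    · have ch1 : ∀ i ≤ P₁.length - 2, c' (P₁.getVert i) = alt 1 0 i := by
        refine fun i hi => chain P₁ hcp (alt 1 0) (s := 0) (k := P₁.length - 2) (by omega)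
          (by rw [SimpleGraph.Walk.getVert_zero, alt_even rfl]; exact hu1) ?_ i (Nat.zero_le _) hi
        intro i _ hik
        have hm := hcm (P₁.getVert (i+1))
        rw [hL₁ (i+1) (by omega), pat_ne (by omega), if_neg (by omega)] at hm
        rwa [alt_pair, Finset.pair_comm]
      have hsp : c' (P₁.getVert (P₁.length - 1)) = 1 := by
        have hw := hcm (P₁.getVert (P₁.length - 1))
        rw [hL₁ (P₁.length - 1) (by omega), pat_ne (by omega), if_pos rfl] at hw
        have hadj2 : G.Adj (P₁.getVert (P₁.length - 1)) v := by
          have := P₁.adj_getVert_succ (show P₁.length - 1 < P₁.length by omega)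
          rwa [show P₁.length - 1 + 1 = P₁.length by omega,
            SimpleGraph.Walk.getVert_length] at this
        have hne := hcp hadj2
        rw [hv2] at hne
        rw [Finset.mem_insert, Finset.mem_singleton] at hw
        rcases hw with hw | hw
        · exact hw
        · exact absurd hw hne
      have H₁ : ∀ i ≤ P₁.length, c' (P₁.getVert i) = pat P₁.length 2 (alt 1 0) i := by
        intro i hi
        by_cases hiL : i = P₁.length
        · rw [hiL, SimpleGraph.Walk.getVert_length, pat_len]; exact hv2
        · rw [pat_ne hiL]
          by_cases hiS : i = P₁.length - 1
          · rw [hiS, alt_even (by omega)]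
            exact hsp
          · exact ch1 i (by omega)
      have ch2 : ∀ i ≤ P₂.length - 1, c' (P₂.getVert i) = alt 1 0 i := by
        refine fun i hi => chain P₂ hcp (alt 1 0) (s := 0) (k := P₂.length - 1) (by omega)
          (by rw [SimpleGraph.Walk.getVert_zero, alt_even rfl]; exact hu1) ?_ i (Nat.zero_le _) hi
        intro i _ hik
        have hm := hcm (P₂.getVert (i+1))
        rw [hL₂ (i+1) (by omega), pat_ne (by omega)] at hm
        rwa [alt_pair, Finset.pair_comm]
      have H₂ : ∀ i ≤ P₂.length, c' (P₂.getVert i) = pat P₂.length 2 (alt 1 0) i := by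
        intro i hi
        by_cases hiL : i = P₂.length
        · rw [hiL, SimpleGraph.Walk.getVert_length, pat_len]; exact hv2
        · rw [pat_ne hiL]; exact ch2 i (by omega)
      have ch3 : ∀ i, 1 ≤ i → i ≤ P₃.length - 1 → c' (P₃.getVert i) = alt 0 2 i := by
        refine fun i hi1 hi => chain P₃ hcp (alt 0 2) (s := 1) (k := P₃.length - 1) (by omega)
          (by rw [alt_odd rfl]; exact hfirst hu1) ?_ i hi1 hi
        intro i hi1 hik
        have hm := hcm (P₃.getVert (i+1))
        rw [hL₃ (i+1) (by omega), pat_ne (by omega), if_neg (by omega),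
          if_neg (by omega)] at hm
        rwa [alt_pair]
      have H₃ : ∀ i ≤ P₃.length, c' (P₃.getVert i)
          = pat P₃.length 2 (fun i => if i = 0 then 1 else alt 0 2 i) i := by
        intro i hi
        by_cases hiL : i = P₃.length
        · rw [hiL, SimpleGraph.Walk.getVert_length, pat_len]; exact hv2
        · rw [pat_ne hiL]
          by_cases hi0 : i = 0
          · rw [hi0, if_pos rfl, SimpleGraph.Walk.getVert_zero]; exact hu1
          · rw [if_neg hi0]; exact ch3 i (by omega) (by omega)
      funext x
      rcases hcov x with hx | hx | hx <;>
        obtain ⟨i, hgvi, hi⟩ := SimpleGraph.Walk.mem_support_iff_exists_getVert.mp hx <;>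
          rw [← hgvi]
      · rw [thetaFun_eval₁ h₁ hi]; exact H₁ i hi
      · rw [thetaFun_eval₂ h₁ h₂ hd12
          (by rw [pat_ne (by omega), pat_ne (by omega)] <;> rfl) (by rw [pat_len, pat_len]) hi]
        exact H₂ i hi
      · rw [thetaFun_eval₃ h₁ h₂ h₃ hd13 hd23
          (by rw [pat_ne (by omega), pat_ne (by omega)] <;> rfl) (by rw [pat_len, pat_len])
          (by rw [pat_ne (by omega), pat_ne (by omega), if_pos rfl] <;> rfl)
          (by rw [pat_len, pat_len]) hi]
        exact H₃ i hi

-- SCHEME D : p,q even >=2, r even >=4. P₁ {0,1}, P₂ {1,2} (first {0,1}),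
-- P₃ first {0,1}, mid {1,2}, last {0,2}. Coloring u=0, v=2.

lemma schemeD {V : Type*} [Fintype V] (G : SimpleGraph V) (p q r : ℕ)
    (hθ : IsTheta G p q r) (hp : p % 2 = 0) (hp0 : 0 < p)
    (hq : q % 2 = 0) (hq0 : 0 < q) (hr : r % 2 = 0) (hr4 : 2 < r) :
    UniqKT G 2 3 := by
  classical
  obtain ⟨u, v, P₁, P₂, P₃, huv, h₁, h₂, h₃, hl₁, hl₂, hl₃, hd12, hd13, hd23, hcov, hedge⟩ := hθ
  subst hl₁; subst hl₂; subst hl₃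
  refine build G h₁ h₂ h₃ hd12 hd13 hd23 hcov hedge
    (pat P₁.length 2 (alt 0 1))
    (pat P₂.length 2 (fun i => if i = 0 then 0 else alt 2 1 i))
    (pat P₃.length 2 (fun i => if i = 0 then 0 else if i = P₃.length - 1 then 0 else alt 2 1 i))
    (pat P₁.length {0,2} (fun _ => {0,1}))
    (pat P₂.length {0,2} (fun i => if i = 0 then {0,1} else {1,2}))
    (pat P₃.length {0,2} (fun i => if i = 0 then {0,1} else if i = 1 then {0,1}
      else if i = P₃.length - 1 then {0,2} else {1,2}))
    ?_ ?_ ?_ ?_ ?_ ?_ ?_ ?_ ?_ ?_ ?_ ?_ ?_ ?_ ?_ ?_ ?_ ?_ ?_ ?_ ?_ ?_ ?_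
  · rw [pat_ne (by omega), pat_ne (by omega)] <;> rfl
  · rw [pat_len, pat_len]
  · rw [pat_ne (by omega), pat_ne (by omega)] <;> rfl
  · rw [pat_len, pat_len]
  · rw [pat_ne (by omega), pat_ne (by omega)] <;> rfl
  · rw [pat_len, pat_len]
  · rw [pat_ne (by omega), pat_ne (by omega)] <;> rfl
  · rw [pat_len, pat_len]
  · intro i; simp only [pat]; split_ifs <;> decide
  · intro i; simp only [pat]; split_ifs <;> decide
  · intro i; simp only [pat]; split_ifs <;> decide
  · intro i; simp only [pat]; split_ifs <;> decide
  · intro i; simp only [pat]; split_ifs <;> decide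
  · intro i; simp only [pat]; split_ifs <;> decide
  · rw [pat_ne (by omega)]
  · rw [pat_len]
  · intro i _; simp only [pat, alt]; split_ifs <;>
      first | decide | omega | exact False.elim (by assumption)
  · intro i _; simp only [pat, alt]; split_ifs <;>
      first | decide | omega | exact False.elim (by assumption)
  · intro i _; simp only [pat, alt]; split_ifs <;>
      first | decide | omega | exact False.elim (by assumption)
  · intro i hi; simp only [pat, alt]; split_ifs <;>
      first | decide | omega | exact False.elim (by assumption)
  · intro i hi; simp only [pat, alt]; split_ifs <;>
      first | decide | omega | exact False.elim (by assumption)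
  · intro i hi; simp only [pat, alt]; split_ifs <;>
      first | decide | omega | exact False.elim (by assumption)
  · intro c' hc'
    obtain ⟨hcm, hcp⟩ := hc'
    have hL₁ : ∀ i ≤ P₁.length, thetaFun P₁ P₂ P₃
        (pat P₁.length {0,2} (fun _ => {0,1}))
        (pat P₂.length {0,2} (fun i => if i = 0 then {0,1} else {1,2}))
        (pat P₃.length {0,2} (fun i => if i = 0 then {0,1} else if i = 1 then {0,1}
          else if i = P₃.length - 1 then {0,2} else {1,2})) (P₁.getVert i)
        = pat P₁.length ({0,2} : Finset ℕ) (fun _ => {0,1}) i :=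
      fun i hi => thetaFun_eval₁ h₁ hi
    have hL₂ : ∀ i ≤ P₂.length, thetaFun P₁ P₂ P₃
        (pat P₁.length {0,2} (fun _ => {0,1}))
        (pat P₂.length {0,2} (fun i => if i = 0 then {0,1} else {1,2}))
        (pat P₃.length {0,2} (fun i => if i = 0 then {0,1} else if i = 1 then {0,1}
          else if i = P₃.length - 1 then {0,2} else {1,2})) (P₂.getVert i)
        = pat P₂.length ({0,2} : Finset ℕ) (fun i => if i = 0 then {0,1} else {1,2}) i :=
      fun i hi => thetaFun_eval₂ h₁ h₂ hd12
        (by rw [pat_ne (by omega), pat_ne (by omega)] <;> rfl)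
        (by rw [pat_len, pat_len]) hi
    have hL₃ : ∀ i ≤ P₃.length, thetaFun P₁ P₂ P₃
        (pat P₁.length {0,2} (fun _ => {0,1}))
        (pat P₂.length {0,2} (fun i => if i = 0 then {0,1} else {1,2}))
        (pat P₃.length {0,2} (fun i => if i = 0 then {0,1} else if i = 1 then {0,1}
          else if i = P₃.length - 1 then {0,2} else {1,2})) (P₃.getVert i)
        = pat P₃.length ({0,2} : Finset ℕ) (fun i => if i = 0 then {0,1} else if i = 1 then {0,1}
          else if i = P₃.length - 1 then {0,2} else {1,2}) i :=
      fun i hi => thetaFun_eval₃ h₁ h₂ h₃ hd13 hd23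
        (by rw [pat_ne (by omega), pat_ne (by omega)] <;> rfl)
        (by rw [pat_len, pat_len])
        (by rw [pat_ne (by omega), pat_ne (by omega)] <;> rfl)
        (by rw [pat_len, pat_len]) hi
    have hu' : c' u = 0 ∨ c' u = 1 := by
      have hm := hcm u
      rw [thetaFun_u h₁, pat_ne (by omega)] at hm
      simpa using hm
    have hv' : c' v = 0 ∨ c' v = 2 := by
      have hm := hcm v
      rw [thetaFun_v h₁, pat_len] at hm
      simpa using hm
    have hadj3 : G.Adj u (P₃.getVert 1) := by
      have := P₃.adj_getVert_succ (show 0 < P₃.length by omega)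
      rwa [SimpleGraph.Walk.getVert_zero] at this
    have hfirst3 : c' u = 0 → c' (P₃.getVert 1) = 1 := by
      intro hu0
      have hw := hcm (P₃.getVert 1)
      rw [hL₃ 1 (by omega), pat_ne (by omega), if_neg (by omega), if_pos rfl] at hw
      have hne := hcp hadj3
      rw [hu0] at hne
      rw [Finset.mem_insert, Finset.mem_singleton] at hw
      rcases hw with hw | hw
      · exact absurd hw.symm hne
      · exact hw
    rcases hu' with hu0 | hu1 <;> rcases hv' with hv0 | hv2
    -- (0,0) : clash along P₃ via the special last internal vertex
    · exfalso
      have ch3 : ∀ i, 1 ≤ i → i ≤ P₃.length - 2 → c' (P₃.getVert i) = alt 2 1 i := by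
        refine fun i hi1 hi => chain P₃ hcp (alt 2 1) (s := 1) (k := P₃.length - 2) (by omega)
          (by rw [alt_odd rfl]; exact hfirst3 hu0) ?_ i hi1 hi
        intro i hi1 hik
        have hm := hcm (P₃.getVert (i+1))
        rw [hL₃ (i+1) (by omega), pat_ne (by omega), if_neg (by omega), if_neg (by omega),
          if_neg (by omega)] at hm
        rwa [alt_pair, Finset.pair_comm]
      have hw := hcm (P₃.getVert (P₃.length - 1))
      rw [hL₃ (P₃.length - 1) (by omega), pat_ne (by omega), if_neg (by omega),
        if_neg (by omega), if_pos rfl] at hw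
      have hadj1 : G.Adj (P₃.getVert (P₃.length - 2)) (P₃.getVert (P₃.length - 1)) := by
        have := P₃.adj_getVert_succ (show P₃.length - 2 < P₃.length by omega)
        rwa [show P₃.length - 2 + 1 = P₃.length - 1 by omega] at this
      have hadj2 : G.Adj (P₃.getVert (P₃.length - 1)) v := by
        have := P₃.adj_getVert_succ (show P₃.length - 1 < P₃.length by omega)
        rwa [show P₃.length - 1 + 1 = P₃.length by omega,
          SimpleGraph.Walk.getVert_length] at this
      have hprev : c' (P₃.getVert (P₃.length - 2)) = 2 := by
        have := ch3 (P₃.length - 2) (by omega) le_rfl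
        rwa [alt_even (by omega)] at this
      have hne1 := hcp hadj1
      rw [hprev] at hne1
      have hne2 := hcp hadj2
      rw [hv0] at hne2
      rw [Finset.mem_insert, Finset.mem_singleton] at hw
      rcases hw with hw | hw
      · exact hne2 hw
      · exact hne1.symm hw
    -- (0,2) : the unique coloring
    · have ch1 : ∀ i ≤ P₁.length - 1, c' (P₁.getVert i) = alt 0 1 i := by
        refine fun i hi => chain P₁ hcp (alt 0 1) (s := 0) (k := P₁.length - 1) (by omega)
          (by rw [SimpleGraph.Walk.getVert_zero, alt_even rfl]; exact hu0) ?_ i (Nat.zero_le _) hi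
        intro i _ hik
        have hm := hcm (P₁.getVert (i+1))
        rw [hL₁ (i+1) (by omega), pat_ne (by omega)] at hm
        rwa [alt_pair]
      have H₁ : ∀ i ≤ P₁.length, c' (P₁.getVert i) = pat P₁.length 2 (alt 0 1) i := by
        intro i hi
        by_cases hiL : i = P₁.length
        · rw [hiL, SimpleGraph.Walk.getVert_length, pat_len]; exact hv2
        · rw [pat_ne hiL]; exact ch1 i (by omega)
      have ch2 : ∀ i ≤ P₂.length - 1, c' (P₂.reverse.getVert i) = alt 2 1 i := by
        refine fun i hi => chain P₂.reverse hcp (alt 2 1) (s := 0) (k := P₂.length - 1)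
          (by rw [SimpleGraph.Walk.length_reverse]; omega)
          (by rw [SimpleGraph.Walk.getVert_zero, alt_even rfl]; exact hv2) ?_ i (Nat.zero_le _) hi
        intro i _ hik
        have hm := hcm (P₂.reverse.getVert (i+1))
        rw [SimpleGraph.Walk.getVert_reverse,
          hL₂ (P₂.length - (i+1)) (by omega), pat_ne (by omega), if_neg (by omega)] at hm
        rw [alt_pair, Finset.pair_comm, SimpleGraph.Walk.getVert_reverse]
        exact hm
      have H₂ : ∀ i ≤ P₂.length,
          c' (P₂.getVert i) = pat P₂.length 2 (fun i => if i = 0 then 0 else alt 2 1 i) i := by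
        intro i hi
        by_cases hiL : i = P₂.length
        · rw [hiL, SimpleGraph.Walk.getVert_length, pat_len]; exact hv2
        · rw [pat_ne hiL]
          by_cases hi0 : i = 0
          · rw [hi0, if_pos rfl, SimpleGraph.Walk.getVert_zero]; exact hu0
          · rw [if_neg hi0]
            have := ch2 (P₂.length - i) (by omega)
            rw [SimpleGraph.Walk.getVert_reverse] at this
            have he : P₂.length - (P₂.length - i) = i := by omega
            rw [he] at this
            rw [this]
            rcases Nat.mod_two_eq_zero_or_one i with hpar | hpar
            · rw [alt_even hpar, alt_even (by omega)]
            · rw [alt_odd hpar, alt_odd (by omega)]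
      have ch3 : ∀ i, 1 ≤ i → i ≤ P₃.length - 2 → c' (P₃.getVert i) = alt 2 1 i := by
        refine fun i hi1 hi => chain P₃ hcp (alt 2 1) (s := 1) (k := P₃.length - 2) (by omega)
          (by rw [alt_odd rfl]; exact hfirst3 hu0) ?_ i hi1 hi
        intro i hi1 hik
        have hm := hcm (P₃.getVert (i+1))
        rw [hL₃ (i+1) (by omega), pat_ne (by omega), if_neg (by omega), if_neg (by omega),
          if_neg (by omega)] at hm
        rwa [alt_pair, Finset.pair_comm]
      have hsp : c' (P₃.getVert (P₃.length - 1)) = 0 := by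
        have hw := hcm (P₃.getVert (P₃.length - 1))
        rw [hL₃ (P₃.length - 1) (by omega), pat_ne (by omega), if_neg (by omega),
          if_neg (by omega), if_pos rfl] at hw
        have hadj1 : G.Adj (P₃.getVert (P₃.length - 2)) (P₃.getVert (P₃.length - 1)) := by
          have := P₃.adj_getVert_succ (show P₃.length - 2 < P₃.length by omega)
          rwa [show P₃.length - 2 + 1 = P₃.length - 1 by omega] at this
        have hprev : c' (P₃.getVert (P₃.length - 2)) = 2 := by
          have := ch3 (P₃.length - 2) (by omega) le_rfl
          rwa [alt_even (by omega)] at this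
        have hne1 := hcp hadj1
        rw [hprev] at hne1
        rw [Finset.mem_insert, Finset.mem_singleton] at hw
        rcases hw with hw | hw
        · exact hw
        · exact absurd hw hne1.symm
      have H₃ : ∀ i ≤ P₃.length, c' (P₃.getVert i) = pat P₃.length 2
          (fun i => if i = 0 then 0 else if i = P₃.length - 1 then 0 else alt 2 1 i) i := by
        intro i hi
        by_cases hiL : i = P₃.length
        · rw [hiL, SimpleGraph.Walk.getVert_length, pat_len]; exact hv2
        · rw [pat_ne hiL]
          by_cases hi0 : i = 0
          · rw [hi0, if_pos rfl, SimpleGraph.Walk.getVert_zero]; exact hu0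
          · rw [if_neg hi0]
            by_cases hiS : i = P₃.length - 1
            · rw [if_pos hiS, hiS]; exact hsp
            · rw [if_neg hiS]; exact ch3 i (by omega) (by omega)
      funext x
      rcases hcov x with hx | hx | hx <;>
        obtain ⟨i, hgvi, hi⟩ := SimpleGraph.Walk.mem_support_iff_exists_getVert.mp hx <;>
          rw [← hgvi]
      · rw [thetaFun_eval₁ h₁ hi]; exact H₁ i hi
      · rw [thetaFun_eval₂ h₁ h₂ hd12
          (by rw [pat_ne (by omega), pat_ne (by omega)] <;> rfl)
          (by rw [pat_len, pat_len]) hi]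
        exact H₂ i hi
      · rw [thetaFun_eval₃ h₁ h₂ h₃ hd13 hd23
          (by rw [pat_ne (by omega), pat_ne (by omega)] <;> rfl)
          (by rw [pat_len, pat_len])
          (by rw [pat_ne (by omega), pat_ne (by omega)] <;> rfl)
          (by rw [pat_len, pat_len]) hi]
        exact H₃ i hi
    -- (1,0) : clash along P₁
    · exfalso
      refine chain_clash P₁ hcp (alt 1 0) (by omega) (Nat.zero_le _)
        (by rw [SimpleGraph.Walk.getVert_zero, alt_even rfl]; exact hu1) ?_ ?_
      · intro i _ hik
        have hm := hcm (P₁.getVert (i+1))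
        rw [hL₁ (i+1) (by omega), pat_ne (by omega)] at hm
        rwa [alt_pair, Finset.pair_comm]
      · rw [alt_odd (by omega)]; exact hv0.symm
    -- (1,2) : clash along P₂
    · exfalso
      have hadj2 : G.Adj u (P₂.getVert 1) := by
        have := P₂.adj_getVert_succ (show 0 < P₂.length by omega)
        rwa [SimpleGraph.Walk.getVert_zero] at this
      have hfirst2 : c' (P₂.getVert 1) = 2 := by
        have hw := hcm (P₂.getVert 1)
        rw [hL₂ 1 (by omega), pat_ne (by omega), if_neg (by omega)] at hw
        have hne := hcp hadj2
        rw [hu1] at hne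
        rw [Finset.mem_insert, Finset.mem_singleton] at hw
        rcases hw with hw | hw
        · exact absurd hw.symm hne
        · exact hw
      refine chain_clash P₂ hcp (alt 1 2) (by omega) (show 1 ≤ P₂.length - 1 by omega)
        (by rw [alt_odd rfl]; exact hfirst2) ?_ ?_
      · intro i hi1 hik
        have hm := hcm (P₂.getVert (i+1))
        rw [hL₂ (i+1) (by omega), pat_ne (by omega), if_neg (by omega)] at hm
        rwa [alt_pair]
      · rw [alt_odd (by omega)]; exact hv2.symm


lemma isTheta_swap12 {W : Type*} {H : SimpleGraph W} {p q r : ℕ} (h : IsTheta H p q r) :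
    IsTheta H q p r := by
  obtain ⟨u, v, P₁, P₂, P₃, huv, h₁, h₂, h₃, hl₁, hl₂, hl₃, hd12, hd13, hd23, hcov, hedge⟩ := h
  exact ⟨u, v, P₂, P₁, P₃, huv, h₂, h₁, h₃, hl₂, hl₁, hl₃,
    fun x a b => hd12 x b a, hd23, hd13,
    fun x => by rcases hcov x with h | h | h
                exacts [Or.inr (Or.inl h), Or.inl h, Or.inr (Or.inr h)],
    fun e he => by rcases hedge e he with h | h | h
                   exacts [Or.inr (Or.inl h), Or.inl h, Or.inr (Or.inr h)]⟩

lemma isTheta_swap23 {W : Type*} {H : SimpleGraph W} {p q r : ℕ} (h : IsTheta H p q r) :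
    IsTheta H p r q := by
  obtain ⟨u, v, P₁, P₂, P₃, huv, h₁, h₂, h₃, hl₁, hl₂, hl₃, hd12, hd13, hd23, hcov, hedge⟩ := h
  exact ⟨u, v, P₁, P₃, P₂, huv, h₁, h₃, h₂, hl₁, hl₃, hl₂,
    hd13, hd12, fun x a b => hd23 x b a,
    fun x => by rcases hcov x with h | h | h
                exacts [Or.inl h, Or.inr (Or.inr h), Or.inr (Or.inl h)],
    fun e he => by rcases hedge e he with h | h | h
                   exacts [Or.inl h, Or.inr (Or.inr h), Or.inr (Or.inl h)]⟩





end ThetaAux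

/-- Every theta graph `θ_{p,q,r}` other than `θ_{2,2,2} = K_{2,3}`
is uniquely `(2,3)`-list colorable. -/
theorem stmt6 [Fintype V] (G : SimpleGraph V) (p q r : ℕ)
    (hp : 0 < p) (hq : 0 < q) (hr : 0 < r)
    (h1 : ¬(p = 1 ∧ q = 1)) (h2 : ¬(p = 1 ∧ r = 1)) (h3 : ¬(q = 1 ∧ r = 1))
    (hθ : IsTheta G p q r) (hne : ¬(p = 2 ∧ q = 2 ∧ r = 2)) :
    UniqKT G 2 3 := by
  open ThetaAux in
  rcases Nat.mod_two_eq_zero_or_one p with hp2 | hp2 <;>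
    rcases Nat.mod_two_eq_zero_or_one q with hq2 | hq2 <;>
      rcases Nat.mod_two_eq_zero_or_one r with hr2 | hr2
  -- (E,E,E) : scheme D
  · by_cases hrr : r = 2
    · by_cases hqq : q = 2
      · exact schemeD G r q p (isTheta_swap12 (isTheta_swap23 (isTheta_swap12 hθ)))
          hr2 hr hq2 hq hp2 (by omega)
      · exact schemeD G p r q (isTheta_swap23 hθ) hp2 hp hr2 hr hq2 (by omega)
    · exact schemeD G p q r hθ hp2 hp hq2 hq hr2 (by omega)
  -- (E,E,O) : scheme A
  · exact schemeA G p q r hθ hp2 hp hq2 hq hr2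
  -- (E,O,E) : scheme A on (p,r,q)
  · exact schemeA G p r q (isTheta_swap23 hθ) hp2 hp hr2 hr hq2
  -- (E,O,O) : scheme B on (q,r,p) or (r,q,p)
  · by_cases hq1 : q = 1
    · exact schemeB G r q p (isTheta_swap12 (isTheta_swap23 (isTheta_swap12 hθ)))
        hr2 (by omega) hq2 hp2 hp
    · exact schemeB G q r p (isTheta_swap23 (isTheta_swap12 hθ)) hq2 (by omega) hr2 hp2 hp
  -- (O,E,E) : scheme A on (q,r,p)
  · exact schemeA G q r p (isTheta_swap23 (isTheta_swap12 hθ)) hq2 hq hr2 hr hp2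
  -- (O,E,O) : scheme B on (p,r,q) or (r,p,q)
  · by_cases hp1 : p = 1
    · exact schemeB G r p q (isTheta_swap12 (isTheta_swap23 hθ)) hr2 (by omega) hp2 hq2 hq
    · exact schemeB G p r q (isTheta_swap23 hθ) hp2 (by omega) hr2 hq2 hq
  -- (O,O,E) : scheme B on (p,q,r) or (q,p,r)
  · by_cases hp1 : p = 1
    · exact schemeB G q p r (isTheta_swap12 hθ) hq2 (by omega) hp2 hr2 hr
    · exact schemeB G p q r hθ hp2 (by omega) hq2 hr2 hr
  -- (O,O,O) : scheme C
  · by_cases hp1 : p = 1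
    · exact schemeC G q p r (isTheta_swap12 hθ) hq2 (by omega) hp2 hr2 (by omega)
    · by_cases hr1 : r = 1
      · exact schemeC G p r q (isTheta_swap23 hθ) hp2 (by omega) hr2 hq2 (by omega)
      · exact schemeC G p q r hθ hp2 (by omega) hq2 hr2 (by omega)
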